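/- arXiv:2512.13631 — 3 statements merged into one kernel-verified Lean document; each statement's English description precedes it below -/
import Mathlib

section
/- Let n ≥ 3 be odd, let θ_j = 2πj/n for j = 0,...,n−1, and let D be the n×n Fourier spectral differentiation matrix. For every integer k with |k| ≤ (n−1)/2, the vector v with components v_j = exp(i k θ_j) satisfies D v = i k · v; i.e., sampled Fourier modes of resolvable wavenumber are eigenvectors of D with eigenvalue i k. -/
open Real Complex

/-- The `n × n` Fourier spectral differentiation matrix (over `ℂ`). -/
noncomputable def specDC (n : ℕ) : Matrix (Fin n) (Fin n) ℂ :=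
  Matrix.of fun j k =>
    if j = k then 0
    else ((-1 : ℂ) ^ ((j : ℤ) - (k : ℤ)) / 2) *
      ((Real.sin (((j : ℝ) - (k : ℝ)) * π / n) : ℂ))⁻¹

open Finset

set_option linter.unusedSectionVars false


noncomputable def E (n : ℕ) (d : ℤ) : ℂ := Complex.exp (d * (π * Complex.I / n))

variable {n : ℕ}

lemma E_add (a b : ℤ) : E n (a + b) = E n a * E n b := by
  rw [E, E, E, ← Complex.exp_add]; congr 1; push_cast; ring

lemma E_zero : E n 0 = 1 := by simp [E]

lemma E_ne_zero (d : ℤ) : E n d ≠ 0 := Complex.exp_ne_zero _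

lemma E_neg (d : ℤ) : E n (-d) = (E n d)⁻¹ := by
  rw [E, E, ← Complex.exp_neg]; congr 1; push_cast; ring

lemma E_mul (m d : ℤ) : E n (m * d) = (E n d) ^ m := by
  rw [E, E, ← Complex.exp_int_mul]; congr 1; push_cast; ring

lemma E_n (hn : n ≠ 0) : E n n = -1 := by
  rw [E]
  have hnc : (n : ℂ) ≠ 0 := Nat.cast_ne_zero.mpr hn
  have : ((n:ℤ) : ℂ) * (π * Complex.I / n) = π * Complex.I := by
    push_cast; field_simp
  rw [this, Complex.exp_pi_mul_I]

lemma E_two_n (hn : n ≠ 0) : E n (2 * n) = 1 := by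
  rw [E_mul, E_n hn]; norm_num

lemma E_two_eq_one (hn : n ≠ 0) {d : ℤ} (hd : (n:ℤ) ∣ d) : E n (2 * d) = 1 := by
  obtain ⟨t, rfl⟩ := hd
  have : (2 : ℤ) * ((n:ℤ) * t) = t * (2 * n) := by ring
  rw [this, E_mul, E_two_n hn, one_zpow]

lemma E_two_ne_one (hn : n ≠ 0) {d : ℤ} (hd : ¬ (n:ℤ) ∣ d) : E n (2 * d) ≠ 1 := by
  intro h
  rw [E, Complex.exp_eq_one_iff] at h
  obtain ⟨m, hm⟩ := h
  have hπ : (π:ℂ) ≠ 0 := by exact_mod_cast Real.pi_ne_zero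
  have hnc : (n : ℂ) ≠ 0 := Nat.cast_ne_zero.mpr hn
  have hd2 : (d:ℂ) = (n:ℂ) * m := by
    field_simp at hm
    have hne : (2 * (π:ℂ) * Complex.I) ≠ 0 := by
      simp [hπ, Complex.I_ne_zero]
    have h2 : (2 * (π:ℂ) * Complex.I) * d = (2 * (π:ℂ) * Complex.I) * ((n:ℂ) * m) := by
      push_cast at hm
      linear_combination (π * Complex.I) * hm
    exact mul_left_cancel₀ hne h2
  exact hd ⟨m, by exact_mod_cast hd2⟩

variable [NeZero n]

noncomputable def T (n : ℕ) [NeZero n] (a : ℤ) : ℂ :=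
  ∑ m ∈ (univ : Finset (Fin n)).erase 0, E n (2 * a * (m : ℕ)) / (E n (2 * (m : ℕ)) - 1)

lemma fin_not_dvd {m : Fin n} (hm : m ≠ 0) : ¬ (n:ℤ) ∣ ((m:ℕ) : ℤ) := by
  intro h
  have h1 : 0 < ((m:ℕ) : ℤ) := by
    have : (m : ℕ) ≠ 0 := Fin.val_ne_zero_iff.mpr hm
    omega
  have h2 : ((m:ℕ) : ℤ) < n := by exact_mod_cast m.isLt
  have := Int.le_of_dvd h1 h
  omega

lemma E_two_m_ne_one (hn : n ≠ 0) {m : Fin n} (hm : m ≠ 0) : E n (2 * (m:ℕ)) ≠ 1 :=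
  E_two_ne_one hn (fin_not_dvd hm)

lemma geom_sum_fin (hn : n ≠ 0) {a : ℤ} (ha : ¬ (n:ℤ) ∣ a) :
    ∑ m : Fin n, E n (2 * a * (m : ℕ)) = 0 := by
  have hw : E n (2 * a) ≠ 1 := E_two_ne_one hn ha
  have hterm : ∀ m : Fin n, E n (2 * a * (m : ℕ)) = (E n (2 * a)) ^ (m : ℕ) := by
    intro m
    rw [← zpow_natCast, ← E_mul]
    congr 1; ring
  simp only [hterm]
  rw [Fin.sum_univ_eq_sum_range]
  rw [geom_sum_eq hw]
  have : (E n (2 * a)) ^ n = 1 := by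
    rw [← zpow_natCast, ← E_mul]
    have h2 : (n:ℤ) * (2 * a) = 2 * (a * n) := by ring
    rw [h2]
    exact E_two_eq_one hn ⟨a, by ring⟩
  rw [this]; simp

lemma geom_sum_erase (hn : n ≠ 0) {a : ℤ} (ha : ¬ (n:ℤ) ∣ a) :
    ∑ m ∈ (univ : Finset (Fin n)).erase 0, E n (2 * a * (m : ℕ)) = -1 := by
  have h := Finset.sum_erase_add univ (fun m : Fin n => E n (2 * a * (m : ℕ)))
    (Finset.mem_univ 0)
  rw [geom_sum_fin hn ha] at h
  have h0 : E n (2 * a * ((0 : Fin n):ℕ)) = 1 := by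
    have : ((0 : Fin n) : ℕ) = 0 := rfl
    rw [this]; simpa using E_zero (n := n)
  rw [h0] at h
  linear_combination h

lemma T_succ (hn : n ≠ 0) {a : ℤ} (ha : ¬ (n:ℤ) ∣ a) : T n (a + 1) = T n a - 1 := by
  have : T n (a+1) = T n a + ∑ m ∈ (univ : Finset (Fin n)).erase 0, E n (2 * a * (m:ℕ)) := by
    rw [T, T, ← Finset.sum_add_distrib]
    apply Finset.sum_congr rfl
    intro m hm
    have hm0 : m ≠ 0 := Finset.ne_of_mem_erase hm
    have hne : E n (2 * (m:ℕ)) - 1 ≠ 0 := sub_ne_zero.mpr (E_two_m_ne_one hn hm0)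
    have hsplit : E n (2 * (a+1) * (m:ℕ)) = E n (2 * a * (m:ℕ)) * E n (2 * (m:ℕ)) := by
      rw [← E_add]; congr 1; ring
    rw [hsplit]
    field_simp
    ring
  rw [this, geom_sum_erase hn ha]
  ring

lemma E_two_neg_fin (hn : n ≠ 0) {m : Fin n} (hm : m ≠ 0) :
    E n (2 * (((-m : Fin n)):ℕ)) = (E n (2 * ((m:ℕ):ℤ)))⁻¹ := by
  have hmpos : 0 < (m : ℕ) := Nat.pos_of_ne_zero (Fin.val_ne_zero_iff.mpr hm)
  have hcoe : (((-m : Fin n)):ℕ) = n - (m:ℕ) := by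
    rw [Fin.coe_neg]
    apply Nat.mod_eq_of_lt
    omega
  rw [hcoe]
  have hle : (m : ℕ) ≤ n := le_of_lt m.isLt
  have hz : ((n - (m:ℕ) : ℕ) : ℤ) = (n : ℤ) - (m:ℕ) := by omega
  rw [hz]
  have : (2 : ℤ) * ((n:ℤ) - (m:ℕ)) = 2 * n + (-(2 * (m:ℕ))) := by ring
  rw [this, E_add, E_two_n hn, E_neg, one_mul]

lemma T_one (hn : n ≠ 0) : T n 1 = ((n:ℂ) - 1) / 2 := by
  have hre : T n 1 = ∑ m ∈ (univ : Finset (Fin n)).erase 0,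
      E n (2 * 1 * (((-m : Fin n)):ℕ)) / (E n (2 * (((-m : Fin n)):ℕ)) - 1) := by
    rw [T]
    apply Finset.sum_nbij' (i := fun m => -m) (j := fun m => -m)
    · intro a ha
      simp only [Finset.mem_erase, Finset.mem_univ, and_true] at ha ⊢
      simpa using ha
    · intro a ha
      simp only [Finset.mem_erase, Finset.mem_univ, and_true] at ha ⊢
      simpa using ha
    · intro a _; simp
    · intro a _; simp
    · intro a _; simp
  have key : T n 1 + T n 1 = (n:ℂ) - 1 := by
    nth_rewrite 2 [hre]
    rw [T, ← Finset.sum_add_distrib]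
    have : ∀ m ∈ (univ : Finset (Fin n)).erase 0,
        E n (2 * 1 * ((m:ℕ))) / (E n (2 * ((m:ℕ))) - 1)
          + E n (2 * 1 * (((-m : Fin n)):ℕ)) / (E n (2 * (((-m : Fin n)):ℕ)) - 1) = 1 := by
      intro m hm
      have hm0 : m ≠ 0 := Finset.ne_of_mem_erase hm
      have hx1 : E n (2 * ((m:ℕ):ℤ)) ≠ 1 := E_two_m_ne_one hn hm0
      have hx0 : E n (2 * ((m:ℕ):ℤ)) ≠ 0 := E_ne_zero _
      have hy := E_two_neg_fin hn hm0
      have e1 : (2:ℤ) * 1 * ((m:ℕ):ℤ) = 2 * ((m:ℕ):ℤ) := by ring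
      have e2 : (2:ℤ) * 1 * (((-m : Fin n):ℕ):ℤ) = 2 * (((-m : Fin n):ℕ):ℤ) := by ring
      rw [e1, e2, hy]
      set x := E n (2 * ((m:ℕ):ℤ)) with hxdef
      have h1 : x - 1 ≠ 0 := sub_ne_zero.mpr hx1
      have h1' : (1:ℂ) - x ≠ 0 := fun h => hx1 (by linear_combination -h)
      have step : x⁻¹ / (x⁻¹ - 1) = 1 / (1 - x) := by
        rw [div_eq_div_iff]
        · field_simp
        · intro h
          apply hx1
          have hxi : x⁻¹ = 1 := by linear_combination h
          rw [← inv_inv x, hxi, inv_one]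
        · exact h1'
      rw [step]
      field_simp
      ring
    rw [Finset.sum_congr rfl this]
    rw [Finset.sum_const]
    have hcard : ((univ : Finset (Fin n)).erase 0).card = n - 1 := by
      rw [Finset.card_erase_of_mem (Finset.mem_univ _)]
      simp
    rw [hcard]
    have h1n : 1 ≤ n := Nat.one_le_iff_ne_zero.mpr hn
    rw [nsmul_eq_mul, mul_one, Nat.cast_sub h1n]
    push_cast
    ring
  have := key
  linear_combination this / 2

lemma T_eval (hn : n ≠ 0) (t : ℕ) (ht : t ≤ n - 1) :
    T n (1 + t) = ((n:ℂ) - 1) / 2 - t := by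
  induction t with
  | zero => simpa using T_one hn
  | succ s ih =>
    have hs : s ≤ n - 1 := by omega
    have hndvd : ¬ (n:ℤ) ∣ (1 + s : ℤ) := by
      intro h
      have h1 : (0:ℤ) < 1 + s := by positivity
      have := Int.le_of_dvd h1 h
      omega
    have : (1 : ℤ) + (s + 1 : ℕ) = (1 + s) + 1 := by push_cast; ring
    rw [this, T_succ hn hndvd, ih hs]
    push_cast
    ring

lemma E_period (hn : n ≠ 0) (x d t : ℤ) : E n (2 * x * (d + n * t)) = E n (2 * x * d) := by
  have h : 2 * x * (d + n * t) = 2 * x * d + 2 * (x * t * n) := by ring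
  rw [h, E_add, E_two_eq_one hn ⟨x * t, by ring⟩, mul_one]

lemma entry_eq (hn : n ≠ 0) {j l : Fin n} (hjl : j ≠ l) :
    specDC n j l = Complex.I * E n (((n:ℤ) + 1) * ((j:ℤ) - (l:ℤ)))
      / (E n (2 * ((j:ℤ) - (l:ℤ))) - 1) := by
  set d : ℤ := (j:ℤ) - (l:ℤ) with hd
  have hdne : ¬ (n:ℤ) ∣ d := by
    intro h
    have hj := j.isLt; have hl := l.isLt
    have hd0 : d = 0 := by
      refine Int.eq_zero_of_abs_lt_dvd h ?_
      rw [hd, abs_sub_lt_iff]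
      constructor <;> [skip; skip] <;> omega
    apply hjl
    have : (j : ℤ) = (l : ℤ) := by omega
    exact Fin.ext (by exact_mod_cast this)
  have hu0 : E n d ≠ 0 := E_ne_zero _
  have h21 : E n (2 * d) ≠ 1 := E_two_ne_one hn hdne
  have hsin : ((Real.sin (((j:ℝ) - (l:ℝ)) * π / n)) : ℂ)
      = (E n (-d) - E n d) * Complex.I / 2 := by
    rw [Complex.ofReal_sin, Complex.sin]
    have h1 : -(((((j:ℝ) - (l:ℝ)) * π / n : ℝ)) : ℂ) * Complex.I = (-d : ℤ) * (π * Complex.I / n) := by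
      simp only [hd]; push_cast; ring
    have h2 : ((((j:ℝ) - (l:ℝ)) * π / n : ℝ) : ℂ) * Complex.I = (d : ℤ) * (π * Complex.I / n) := by
      simp only [hd]; push_cast; ring
    rw [h1, h2, E, E]
  simp only [specDC, Matrix.of_apply, if_neg hjl]
  rw [hsin]
  have hneg1 : ((-1 : ℂ)) ^ d = E n (d * n) := by rw [E_mul, E_n hn]
  have hEn1 : E n (((n:ℤ) + 1) * d) = E n (d * n) * E n d := by
    rw [← E_add]; congr 1; ring
  have hE2 : E n (2 * d) = E n d * E n d := by
    rw [← E_add]; congr 1; ring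
  rw [hneg1, hEn1, E_neg]
  set u := E n d with hu
  set w := E n (d * n) with hw
  have huu : u * u - 1 ≠ 0 := sub_ne_zero.mpr (hE2 ▸ h21)
  rw [hE2]
  have hdiff : u⁻¹ - u ≠ 0 := by
    intro h
    apply huu
    have : u⁻¹ = u := by linear_combination h
    have h2 : u * u⁻¹ = u * u := by rw [this]
    rw [mul_inv_cancel₀ hu0] at h2
    linear_combination -h2
  have h1u : 1 - u * u ≠ 0 := by intro h; apply huu; linear_combination -h
  have h1u2 : 1 - u ^ 2 ≠ 0 := by rw [sq]; exact h1u
  have huu2 : -1 + u ^ 2 ≠ 0 := by intro h; apply huu; linear_combination h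
  have hinv : ((u⁻¹ - u) * Complex.I / 2) * (2 * u / ((1 - u * u) * Complex.I)) = 1 := by
    field_simp
  rw [inv_eq_of_mul_eq_one_right hinv]
  rw [div_mul_div_comm, div_eq_div_iff (mul_ne_zero two_ne_zero (mul_ne_zero h1u Complex.I_ne_zero)) huu]
  linear_combination (-(2 * w * u * (1 - u * u))) * Complex.I_sq


theorem stmt_6 (n : ℕ) (hodd : Odd n) (hn : 3 ≤ n)
    (k : ℤ) (hk : |k| ≤ ((n : ℤ) - 1) / 2) :
    (specDC n).mulVec
        (fun j : Fin n => Complex.exp (Complex.I * k * (2 * π * j / n)))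
      = (Complex.I * k) •
        (fun j : Fin n => Complex.exp (Complex.I * k * (2 * π * j / n))) := by
  obtain ⟨p, hp⟩ := hodd
  have hn0 : n ≠ 0 := by omega
  haveI : NeZero n := ⟨hn0⟩
  have hnz : (n : ℤ) = 2 * p + 1 := by exact_mod_cast hp
  have hkp : -(p:ℤ) ≤ k ∧ k ≤ (p:ℤ) := by
    have := abs_le.mp hk
    omega
  set a : ℤ := (p : ℤ) + 1 - k with ha
  set t' : ℕ := ((p : ℤ) - k).toNat with ht'def
  have ht'z : (t' : ℤ) = (p : ℤ) - k := by
    rw [ht'def, Int.toNat_of_nonneg]; omega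
  have hTa : T n a = k := by
    have h1 : a = 1 + (t' : ℤ) := by omega
    have h2 : t' ≤ n - 1 := by omega
    rw [h1, T_eval hn0 t' h2]
    have hz : ((n:ℤ) - 1 - 2 * t' - 2 * k) = 0 := by omega
    have hzc : (((n:ℤ) - 1 - 2 * t' - 2 * k : ℤ) : ℂ) = 0 := by rw [hz]; simp
    push_cast at hzc
    linear_combination hzc / 2
  have hv : ∀ l : Fin n, Complex.exp (Complex.I * k * (2 * π * l / n)) = E n (2 * k * (l : ℤ)) := by
    intro l
    rw [E]; congr 1; push_cast; ring
  funext j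
  have hlhs : (specDC n).mulVec
      (fun j : Fin n => Complex.exp (Complex.I * k * (2 * π * j / n))) j
      = ∑ l : Fin n, specDC n j l * Complex.exp (Complex.I * k * (2 * π * l / n)) := by
    simp [Matrix.mulVec, dotProduct]
  rw [hlhs]
  rw [← Finset.sum_erase_add Finset.univ _ (Finset.mem_univ j)]
  have hjterm : specDC n j j * Complex.exp (Complex.I * k * (2 * π * j / n)) = 0 := by
    simp [specDC]
  rw [hjterm, add_zero]
  have hterm : ∀ l ∈ Finset.univ.erase j,
      specDC n j l * Complex.exp (Complex.I * k * (2 * π * l / n))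
        = (Complex.I * E n (2 * k * (j : ℤ))) *
          (E n (2 * a * ((j - l : Fin n) : ℕ)) / (E n (2 * ((j - l : Fin n) : ℕ)) - 1)) := by
    intro l hl
    have hlj : l ≠ j := Finset.ne_of_mem_erase hl
    rw [entry_eq hn0 (Ne.symm hlj), hv l]
    set d : ℤ := (j : ℤ) - (l : ℤ) with hd
    set d' : ℕ := ((j - l : Fin n) : ℕ) with hd'
    have hsub : (d' : ℤ) = d + ((if l ≤ j then 0 else n : ℕ) : ℤ) := by
      rw [hd', hd]
      exact Fin.intCast_val_sub_eq_sub_add_ite j l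
    set t : ℤ := if l ≤ j then 0 else -1 with ht
    have hdd : d = (d' : ℤ) + (n : ℤ) * t := by
      rw [ht]
      split_ifs at hsub ⊢ with h <;> push_cast at hsub <;> omega
    have claimA : E n (((n:ℤ) + 1) * d) * E n (2 * k * (l : ℤ)) =
        E n (2 * k * (j : ℤ)) * E n (2 * a * d) := by
      rw [← E_add, ← E_add]
      congr 1
      rw [ha, hd]
      linear_combination ((j:ℤ) - (l:ℤ)) * hnz
    have claimB : E n (2 * a * d) = E n (2 * a * (d' : ℤ)) := by
      rw [hdd]; exact E_period hn0 a d' t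
    have claimC : E n (2 * d) = E n (2 * (d' : ℤ)) := by
      have e1 : (2 : ℤ) * d = 2 * 1 * d := by ring
      have e2 : (2 : ℤ) * (d' : ℤ) = 2 * 1 * (d' : ℤ) := by ring
      rw [e1, e2, hdd]
      exact E_period hn0 1 d' t
    rw [claimC, ← claimB]
    have hjl0 : (j - l : Fin n) ≠ 0 := sub_ne_zero.mpr (Ne.symm hlj)
    have hden : E n (2 * ((d' : ℕ) : ℤ)) - 1 ≠ 0 :=
      sub_ne_zero.mpr (E_two_m_ne_one hn0 hjl0)
    field_simp
    linear_combination claimA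
  rw [Finset.sum_congr rfl hterm, ← Finset.mul_sum]
  have hsum : ∑ l ∈ Finset.univ.erase j,
      E n (2 * a * ((j - l : Fin n) : ℕ)) / (E n (2 * ((j - l : Fin n) : ℕ)) - 1) = T n a := by
    rw [T]
    apply Finset.sum_nbij' (i := fun l => j - l) (j := fun m => j - m)
    · intro l hl
      simp only [Finset.mem_erase, Finset.mem_univ, and_true] at hl ⊢
      intro h
      exact hl (by rwa [sub_eq_zero, eq_comm] at h)
    · intro m hm
      simp only [Finset.mem_erase, Finset.mem_univ, and_true] at hm ⊢
      intro h
      apply hm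
      have := congrArg (fun x => j - x) h
      simpa [sub_sub_cancel] using this
    · intro l _; simp [sub_sub_cancel]
    · intro m _; simp [sub_sub_cancel]
    · intro l _; rfl
  rw [hsum, hTa]
  simp only [Pi.smul_apply, smul_eq_mul]
  rw [hv j]
  ring
end

section
/- Let ω₁, ω₂ > 0 be rationally independent and let D₁, D₂ be Fourier spectral differentiation matrices of odd sizes n₁, n₂ ≥ 3. Then the kernel of the Kronecker-sum operator L = ω₁ (I_{n₂} ⊗ D₁) + ω₂ (D₂ ⊗ I_{n₁}) on ℂ^{n₁n₂} is exactly one-dimensional, spanned by the all-ones vector. -/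
open Real Matrix Kronecker

noncomputable def eeK (n : ℕ) (m : ℤ) : ℂ := Complex.exp (2 * Real.pi * Complex.I * m / n)

lemma eeK_eq_one_iff (n : ℕ) (hn : 0 < n) (m : ℤ) : eeK n m = 1 ↔ (n:ℤ) ∣ m := by
  rw [eeK, Complex.exp_eq_one_iff]
  constructor
  · rintro ⟨t, ht⟩
    refine ⟨t, ?_⟩
    have hn' : (n:ℂ) ≠ 0 := Nat.cast_ne_zero.mpr hn.ne'
    have h2 : (2 * (Real.pi:ℂ) * Complex.I) ≠ 0 := by
      simp [Real.pi_ne_zero, Complex.I_ne_zero]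
    have : (m:ℂ) = n * t := by
      field_simp at ht
      apply mul_left_cancel₀ h2
      linear_combination (2 * (Real.pi:ℂ) * Complex.I) * ht
    exact_mod_cast this
  · rintro ⟨t, rfl⟩
    refine ⟨t, ?_⟩
    have hn' : (n:ℂ) ≠ 0 := Nat.cast_ne_zero.mpr hn.ne'
    field_simp
    push_cast
    ring

lemma char_sum (n : ℕ) (hn : 0 < n) (m : ℤ) :
    ∑ d ∈ Finset.range n, Complex.exp (2 * Real.pi * Complex.I * m * d / n)
      = if (n:ℤ) ∣ m then (n:ℂ) else 0 := by
  have hn' : (n:ℂ) ≠ 0 := Nat.cast_ne_zero.mpr hn.ne'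
  have key : ∀ d : ℕ, Complex.exp (2 * Real.pi * Complex.I * m * d / n) = (eeK n m) ^ d := by
    intro d
    rw [eeK, ← Complex.exp_nat_mul]
    congr 1
    field_simp
  simp only [key]
  by_cases hx : eeK n m = 1
  · simp [hx, (eeK_eq_one_iff n hn m).1 hx]
  · rw [if_neg (fun h => hx ((eeK_eq_one_iff n hn m).2 h))]
    rw [geom_sum_eq hx]
    have hpow : (eeK n m) ^ n = 1 := by
      rw [eeK, ← Complex.exp_nat_mul]
      have : (n:ℂ) * (2 * Real.pi * Complex.I * m / n) = m * (2 * Real.pi * Complex.I) := by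
        field_simp
      rw [this]
      exact Complex.exp_int_mul_two_pi_mul_I m
    rw [hpow]
    simp

lemma aux_gs (w : ℂ) (n : ℕ) :
    (w - 1) * ∑ j ∈ Finset.range n, (j:ℂ) * w ^ j
      = n * w ^ n - w ^ n + 1 - ∑ j ∈ Finset.range n, w ^ j := by
  induction n with
  | zero => simp
  | succ n ih =>
    rw [Finset.sum_range_succ, Finset.sum_range_succ]
    push_cast
    ring_nf
    ring_nf at ih
    linear_combination ih

lemma deriv_geom (n : ℕ) (w : ℂ) (hw : w ^ n = 1) (hw1 : w ≠ 1) :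
    (w - 1) * ∑ j ∈ Finset.range n, (j:ℂ) * w ^ j = n := by
  have h0 : ∑ j ∈ Finset.range n, w ^ j = 0 := by
    have := geom_sum_eq hw1 n
    rw [this, hw]
    simp
  rw [aux_gs, hw, h0]
  ring

noncomputable def Gf (n : ℕ) (k : ℤ) (d : ℤ) : ℂ :=
  (if (n:ℤ) ∣ d then 0 else ((-1:ℂ)^d / 2) * ((Real.sin ((d:ℝ) * Real.pi / n) : ℂ))⁻¹) *
    Complex.exp (-(2 * Real.pi * Complex.I * k * d / n))

lemma term_eq (n : ℕ) (s : ℕ) (hn : n = 2*s+1) (d : ℤ) (hd : ¬ (n:ℤ) ∣ d) :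
    ((-1:ℂ)^d / 2) * ((Real.sin ((d:ℝ) * Real.pi / n) : ℂ))⁻¹
      = Complex.I * (eeK n d)^(s+1) / (eeK n d - 1) := by
  have hnpos : 0 < n := by omega
  have hn' : (n:ℂ) ≠ 0 := Nat.cast_ne_zero.mpr hnpos.ne'
  set ζ : ℂ := Complex.exp (Real.pi * Complex.I * d / n) with hζ
  have hζ0 : ζ ≠ 0 := Complex.exp_ne_zero _
  have hζ2 : eeK n d = ζ^2 := by
    rw [eeK, hζ, ← Complex.exp_nat_mul]
    congr 1
    field_simp
    ring
  have hζn : ζ ^ n = (-1:ℂ)^d := by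
    rw [hζ, ← Complex.exp_nat_mul]
    have : (n:ℂ) * (Real.pi * Complex.I * d / n) = d * (Real.pi * Complex.I) := by
      field_simp
    rw [this, Complex.exp_int_mul, Complex.exp_pi_mul_I]
  have hw1 : eeK n d ≠ 1 := fun h => hd ((eeK_eq_one_iff n hnpos d).1 h)
  have hζ21 : ζ^2 - 1 ≠ 0 := by
    rw [← hζ2]
    exact sub_ne_zero.mpr hw1
  have hsin : ((Real.sin ((d:ℝ) * Real.pi / n) : ℝ) : ℂ) = (ζ⁻¹ - ζ) * Complex.I / 2 := by
    rw [Complex.ofReal_sin, Complex.sin,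
      show (-(((((d:ℝ) * Real.pi / n) : ℝ)):ℂ) * Complex.I) = -(Real.pi * Complex.I * d / n) by
        push_cast; ring,
      show ((((((d:ℝ) * Real.pi / n) : ℝ)):ℂ) * Complex.I) = Real.pi * Complex.I * d / n by
        push_cast; ring,
      Complex.exp_neg]
  have hinv : ((ζ⁻¹ - ζ) * Complex.I / 2)⁻¹ = 2 * ζ * Complex.I / (ζ^2 - 1) := by
    apply inv_eq_of_mul_eq_one_right
    have e1 : ((ζ⁻¹ - ζ) * Complex.I / 2) * (2 * ζ * Complex.I / (ζ^2 - 1))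
        = ((ζ⁻¹ - ζ) * ζ) * (Complex.I * Complex.I) / (ζ^2 - 1) := by ring
    have e2 : (ζ⁻¹ - ζ) * ζ = 1 - ζ^2 := by
      rw [sub_mul, inv_mul_cancel₀ hζ0]; ring
    rw [e1, e2, Complex.I_mul_I]
    rw [div_eq_one_iff_eq hζ21]
    ring
  rw [hsin, hζ2, ← hζn, hinv]
  have hpow : (ζ^2)^(s+1) = ζ^n * ζ := by
    rw [← pow_mul, hn]; ring
  rw [hpow]
  ring

lemma eeK_arg (n : ℕ) (m : ℤ) (d : ℕ) :
    Complex.exp (2 * Real.pi * Complex.I * m * d / n) = eeK n (m * d) := by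
  rw [eeK]; congr 1; push_cast; ring

lemma eeK_pow_n (n : ℕ) (hn : 0 < n) (m : ℤ) : eeK n m ^ n = 1 := by
  rw [eeK, ← Complex.exp_nat_mul]
  have hn' : (n:ℂ) ≠ 0 := Nat.cast_ne_zero.mpr hn.ne'
  have : (n:ℂ) * (2 * Real.pi * Complex.I * m / n) = m * (2 * Real.pi * Complex.I) := by
    field_simp
  rw [this, Complex.exp_int_mul_two_pi_mul_I]

lemma eeK_nat_pow (n : ℕ) (a : ℤ) (m : ℕ) : eeK n a ^ m = eeK n (a * m) := by
  rw [eeK, eeK, ← Complex.exp_nat_mul]; congr 1; push_cast; ring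

lemma eeK_add (n : ℕ) (a b : ℤ) : eeK n (a + b) = eeK n a * eeK n b := by
  rw [eeK, eeK, eeK, ← Complex.exp_add]; congr 1; push_cast; ring

lemma S_eq (n s : ℕ) (hn : n = 2*s+1) (k : ℤ) (hk : k.natAbs ≤ s) :
    ∑ d ∈ Finset.range n, Gf n k (d:ℤ) = Complex.I * k := by
  have hnpos : 0 < n := by omega
  have hn' : (n:ℂ) ≠ 0 := Nat.cast_ne_zero.mpr hnpos.ne'
  have hkl : -(s:ℤ) ≤ k := by omega
  have hku : k ≤ (s:ℤ) := by omega
  set H : ℕ → ℂ := fun d =>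
    (Complex.I / n) * ∑ j ∈ Finset.range n, (j:ℂ) * eeK n (((j:ℤ) + s + 1 - k) * d) with hH
  have step1 : ∀ d ∈ Finset.range n, Gf n k (d:ℤ) = if d = 0 then 0 else H d := by
    intro d hd
    rw [Finset.mem_range] at hd
    by_cases h0 : d = 0
    · subst h0; simp [Gf]
    · rw [if_neg h0]
      have hnd : ¬ (n:ℤ) ∣ (d:ℤ) := by
        intro hdvd
        have := Int.le_of_dvd (by exact_mod_cast Nat.pos_of_ne_zero h0) hdvd
        omega
      set w := eeK n (d:ℤ) with hw
      have hw1 : w ≠ 1 := fun h => hnd ((eeK_eq_one_iff n hnpos _).1 h)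
      have hwn : w ^ n = 1 := eeK_pow_n n hnpos _
      have hS := deriv_geom n w hwn hw1
      rw [Gf, if_neg hnd, term_eq n s hn _ hnd]
      have hexp : Complex.exp (-(2 * Real.pi * Complex.I * (k:ℂ) * (((d:ℕ):ℤ):ℂ) / n)) = eeK n (-(k * d)) := by
        rw [eeK]; congr 1; push_cast; ring
      rw [hexp]
      have hdiv : Complex.I * w ^ (s+1) / (w - 1)
          = Complex.I * w ^ (s+1) * (∑ j ∈ Finset.range n, (j:ℂ) * w ^ j) / n := by
        rw [div_eq_div_iff (sub_ne_zero.mpr hw1) hn']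
        linear_combination (-(Complex.I * w ^ (s+1))) * hS
      rw [hdiv]
      simp only [hH]
      simp only [Finset.mul_sum, Finset.sum_div, Finset.sum_mul]
      apply Finset.sum_congr rfl
      intro j _
      have hcomb : w ^ (s+1) * w ^ j * eeK n (-(k * d)) = eeK n (((j:ℤ)+(s:ℤ)+1-k) * d) := by
        rw [hw, eeK_nat_pow, eeK_nat_pow, ← eeK_add, ← eeK_add]
        congr 1; push_cast; ring
      rw [← hcomb]
      ring
  rw [Finset.sum_congr rfl step1]
  have split : ∑ d ∈ Finset.range n, (if d = 0 then (0:ℂ) else H d)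
      = (∑ d ∈ Finset.range n, H d) - H 0 := by
    have h1 : ∑ d ∈ Finset.range n, (if d = 0 then (0:ℂ) else H d)
        = ∑ d ∈ Finset.range n, (H d - if d = 0 then H d else 0) := by
      apply Finset.sum_congr rfl; intro d _; by_cases h : d = 0 <;> simp [h]
    rw [h1, Finset.sum_sub_distrib, Finset.sum_ite_eq' (Finset.range n) 0 H]
    simp [Finset.mem_range, hnpos]
  rw [split]
  have hH0 : H 0 = Complex.I * s := by
    simp only [hH]
    have e1 : ∀ j ∈ Finset.range n, (j:ℂ) * eeK n (((j:ℤ) + s + 1 - k) * (0:ℕ)) = (j:ℂ) := by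
      intro j _
      simp [eeK]
    rw [Finset.sum_congr rfl e1]
    have hsum : (∑ j ∈ Finset.range n, (j:ℂ)) = ((s * n : ℕ) : ℂ) := by
      rw [← Nat.cast_sum]
      congr 1
      have h2 := Finset.sum_range_id_mul_two n
      have h3 : n * (n-1) = (s * n) * 2 := by
        rw [hn]
        have : (2*s+1) - 1 = 2*s := by omega
        rw [this]; ring
      apply Nat.eq_of_mul_eq_mul_right (by norm_num : 0 < 2)
      rw [h2, h3]
    rw [hsum]
    push_cast
    field_simp
  have hHsum : ∑ d ∈ Finset.range n, H d = Complex.I * ((k:ℂ) + s) := by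
    simp only [hH]
    rw [← Finset.mul_sum, Finset.sum_comm]
    have inner : ∀ j ∈ Finset.range n,
        ∑ d ∈ Finset.range n, (j:ℂ) * eeK n (((j:ℤ)+s+1-k) * d)
          = (j:ℂ) * (if (n:ℤ) ∣ ((j:ℤ)+s+1-k) then (n:ℂ) else 0) := by
      intro j _
      rw [← Finset.mul_sum]
      congr 1
      rw [← char_sum n hnpos ((j:ℤ)+s+1-k)]
      apply Finset.sum_congr rfl
      intro d _
      rw [eeK_arg]
    rw [Finset.sum_congr rfl inner]
    have hnZ : (0:ℤ) < n := by exact_mod_cast hnpos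
    have hmem : (k + (s:ℤ)).toNat ∈ Finset.range n := by
      rw [Finset.mem_range]; omega
    have huniq : ∀ j ∈ Finset.range n, j ≠ (k + (s:ℤ)).toNat →
        (j:ℂ) * (if (n:ℤ) ∣ ((j:ℤ)+s+1-k) then (n:ℂ) else 0) = 0 := by
      intro j hj hne
      rw [Finset.mem_range] at hj
      rw [if_neg, mul_zero]
      rintro ⟨t, ht⟩
      have hjZ : (j:ℤ) < n := by exact_mod_cast hj
      have hm1 : (1:ℤ) ≤ (j:ℤ)+s+1-k := by omega
      have hm2 : (j:ℤ)+s+1-k ≤ 2*(n:ℤ) - 1 := by omega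
      have htpos : 0 < t := by
        by_contra hc
        push_neg at hc
        have : (n:ℤ) * t ≤ 0 := mul_nonpos_of_nonneg_of_nonpos hnZ.le hc
        linarith [ht ▸ hm1]
      have htlt : t < 2 := by
        by_contra hc
        push_neg at hc
        have : (n:ℤ) * 2 ≤ (n:ℤ) * t := mul_le_mul_of_nonneg_left hc hnZ.le
        rw [← ht] at this
        linarith
      have ht1 : t = 1 := by omega
      rw [ht1, mul_one] at ht
      apply hne
      omega
    rw [Finset.sum_eq_single_of_mem _ hmem huniq]
    have hcst : (((k + (s:ℤ)).toNat : ℤ)) = k + s := Int.toNat_of_nonneg (by omega)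
    have hdv : ((k + (s:ℤ)).toNat :ℤ) + s + 1 - k = (n:ℤ) := by omega
    rw [hdv, if_pos dvd_rfl]
    have hcast : (((k + (s:ℤ)).toNat : ℕ) : ℂ) = (k:ℂ) + s := by
      have : (((k + (s:ℤ)).toNat : ℤ) : ℂ) = ((k + (s:ℤ) : ℤ) : ℂ) := by rw [hcst]
      push_cast at this
      exact this
    rw [hcast]
    field_simp
  rw [hH0, hHsum]
  ring

lemma Gf_per (n : ℕ) (hodd : Odd n) (k : ℤ) : Function.Periodic (Gf n k) (n:ℤ) := by
  intro d
  have hpos : 0 < n := hodd.pos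
  have hnR : (n:ℝ) ≠ 0 := Nat.cast_ne_zero.mpr hpos.ne'
  have hdvd : ((n:ℤ) ∣ d + n) ↔ ((n:ℤ) ∣ d) := dvd_add_self_right
  have hexp : ∀ e : ℤ, Complex.exp (-(2 * Real.pi * Complex.I * (k:ℂ) * (e:ℂ) / n)) = eeK n (-(k*e)) := by
    intro e; rw [eeK]; congr 1; push_cast; ring
  rw [Gf, Gf, hexp, hexp]
  by_cases hd : (n:ℤ) ∣ d
  · rw [if_pos (hdvd.mpr hd), if_pos hd]
    simp
  · rw [if_neg (fun h => hd (hdvd.mp h)), if_neg hd]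
    have h1 : (-1:ℂ)^(d + (n:ℤ)) = -((-1:ℂ)^d) := by
      rw [zpow_add₀ (by norm_num : (-1:ℂ) ≠ 0), zpow_natCast, hodd.neg_one_pow]
      ring
    have h2 : Real.sin (((d + (n:ℤ) : ℤ):ℝ) * Real.pi / n) = -Real.sin ((d:ℝ) * Real.pi / n) := by
      have e : ((d + (n:ℤ) : ℤ):ℝ) * Real.pi / n = (d:ℝ) * Real.pi / n + Real.pi := by
        push_cast; field_simp
      rw [e, Real.sin_add_pi]
    have h3 : eeK n (-(k * (d + n))) = eeK n (-(k * d)) := by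
      have e : -(k * (d + (n:ℤ))) = -(k * d) + (-k) * n := by ring
      rw [e, eeK_add]
      have : eeK n ((-k) * n) = 1 := (eeK_eq_one_iff n hpos _).mpr ⟨-k, by ring⟩
      rw [this, mul_one]
    rw [h1, h2, h3]
    push_cast
    rw [inv_neg]
    ring

lemma Gf_shift (n : ℕ) (hodd : Odd n) (k : ℤ) {a b : ℤ} (h : (n:ℤ) ∣ (a - b)) :
    Gf n k a = Gf n k b := by
  obtain ⟨t, ht⟩ := h
  have hper := (Gf_per n hodd k).sub_int_mul_eq (x := a) (n := t)
  have e : a - t * (n:ℤ) = b := by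
    rw [mul_comm]
    linarith [ht]
  simp only [Int.cast_id] at hper
  rw [e] at hper
  exact hper.symm

lemma eig (n s : ℕ) (hn : n = 2*s+1) (k : ℤ) (hk : k.natAbs ≤ s) (j : Fin n) :
    ∑ m : Fin n, specDC n j m * eeK n (k * m) = Complex.I * k * eeK n (k * j) := by
  have hodd : Odd n := ⟨s, by omega⟩
  have hpos : 0 < n := by omega
  haveI : NeZero n := ⟨hpos.ne'⟩
  have step : ∀ m : Fin n, specDC n j m * eeK n (k * m)
      = eeK n (k * j) * Gf n k ((j:ℤ) - (m:ℤ)) := by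
    intro m
    rw [specDC, Gf]
    simp only [Matrix.of_apply]
    by_cases h : j = m
    · subst h
      simp
    · have hne : ¬ (n:ℤ) ∣ ((j:ℤ) - (m:ℤ)) := by
        intro hdvd
        have hj : (j:ℤ) < n := by exact_mod_cast j.isLt
        have hm : (m:ℤ) < n := by exact_mod_cast m.isLt
        have h0 := Int.eq_zero_of_abs_lt_dvd hdvd (by
          rw [abs_sub_lt_iff]; constructor <;> omega)
        exact h (Fin.ext (by omega))
      rw [if_neg h, if_neg hne]
      have hsin : ((((j:ℤ) - (m:ℤ) : ℤ) : ℝ)) = (j:ℝ) - (m:ℝ) := by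
        push_cast
        ring
      have hexp : Complex.exp (-(2 * Real.pi * Complex.I * (k:ℂ) * ((((j:ℤ) - (m:ℤ)):ℤ):ℂ) / n))
          = eeK n (-(k * ((j:ℤ) - (m:ℤ)))) := by
        rw [eeK]; congr 1; push_cast; ring
      rw [hsin, hexp]
      have hsplit : eeK n (k * (m:ℤ)) = eeK n (k * (j:ℤ)) * eeK n (-(k * ((j:ℤ) - (m:ℤ)))) := by
        rw [← eeK_add]
        congr 1
        ring
      rw [hsplit]
      ring
  rw [Finset.sum_congr rfl (fun m _ => step m), ← Finset.mul_sum]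
  have reindex : ∑ m : Fin n, Gf n k ((j:ℤ) - (m:ℤ)) = ∑ d : Fin n, Gf n k ((d:ℤ)) := by
    apply Fintype.sum_equiv (Equiv.subLeft j)
    intro d
    show Gf n k ((j:ℤ) - (d:ℤ)) = Gf n k ((((Equiv.subLeft j) d : Fin n)):ℤ)
    have hsl : (Equiv.subLeft j) d = j - d := rfl
    rw [hsl]
    apply Gf_shift n hodd
    have hb : d.val ≤ n := le_of_lt d.isLt
    have hval : ((j - d : Fin n)).val = ((n - d.val) + j.val) % n := by
      rw [Fin.sub_def]
    set c : ℕ := ((n - d.val) + j.val) % n with hc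
    set q : ℕ := ((n - d.val) + j.val) / n with hq
    have hqe : n * q + c = (n - d.val) + j.val := Nat.div_add_mod _ n
    have hZ : (n:ℤ) * q + c = ((n:ℤ) - d.val) + j.val := by
      zify [hb] at hqe
      exact hqe
    refine ⟨(q:ℤ) - 1, ?_⟩
    rw [hval]
    push_cast
    linarith [hZ]
  rw [reindex]
  rw [Fin.sum_univ_eq_sum_range (fun i : ℕ => Gf n k (i:ℤ)) n]
  rw [S_eq n s hn k hk]
  ring

lemma specDC_antisym (n : ℕ) (j m : Fin n) : specDC n j m = - specDC n m j := by
  rw [specDC]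
  simp only [Matrix.of_apply]
  by_cases h : j = m
  · subst h; simp
  · rw [if_neg h, if_neg (fun hh => h hh.symm)]
    have h1 : (-1:ℂ)^((j:ℤ) - (m:ℤ)) = (-1:ℂ)^((m:ℤ) - (j:ℤ)) := by
      rcases Int.even_or_odd ((j:ℤ)-(m:ℤ)) with he | ho
      · rw [he.neg_one_zpow, (by obtain ⟨t,ht⟩ := he; exact ⟨-t, by omega⟩ : Even ((m:ℤ)-(j:ℤ))).neg_one_zpow]
      · rw [ho.neg_one_zpow, (by obtain ⟨t,ht⟩ := ho; exact ⟨-t-1, by omega⟩ : Odd ((m:ℤ)-(j:ℤ))).neg_one_zpow]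
    have h2 : Real.sin (((j:ℝ) - (m:ℝ)) * Real.pi / n) = -Real.sin (((m:ℝ) - (j:ℝ)) * Real.pi / n) := by
      rw [show ((j:ℝ) - (m:ℝ)) * Real.pi / n = -(((m:ℝ) - (j:ℝ)) * Real.pi / n) by ring,
        Real.sin_neg]
    rw [h1, h2]
    push_cast
    rw [inv_neg]
    ring

lemma col_eig (n s : ℕ) (hn : n = 2*s+1) (k : ℤ) (hk : k.natAbs ≤ s) (m : Fin n) :
    ∑ j : Fin n, eeK n (k * j) * specDC n j m = -(Complex.I * k) * eeK n (k * m) := by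
  have e : ∀ j : Fin n, eeK n (k * j) * specDC n j m = -(specDC n m j * eeK n (k * j)) := by
    intro j
    rw [specDC_antisym n j m]
    ring
  rw [Finset.sum_congr rfl (fun j _ => e j), Finset.sum_neg_distrib, eig n s hn k hk m]
  ring

lemma dvd_iff_eq (n : ℕ) (hpos : 0 < n) (m p : Fin n) :
    (n:ℤ) ∣ ((m:ℤ) - (p:ℤ)) ↔ m = p := by
  constructor
  · intro hdvd
    have hm : (m:ℤ) < n := by exact_mod_cast m.isLt
    have hp : (p:ℤ) < n := by exact_mod_cast p.isLt
    have h0 := Int.eq_zero_of_abs_lt_dvd hdvd (by rw [abs_sub_lt_iff]; constructor <;> omega)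
    exact Fin.ext (by omega)
  · rintro rfl; simp

lemma orth (n s : ℕ) (hn : n = 2*s+1) (p m : Fin n) :
    ∑ k ∈ Finset.Icc (-(s:ℤ)) (s:ℤ), eeK n (-(k * p)) * eeK n (k * m)
      = if m = p then (n:ℂ) else 0 := by
  have hpos : 0 < n := by omega
  have e1 : ∀ k ∈ Finset.Icc (-(s:ℤ)) (s:ℤ), eeK n (-(k * p)) * eeK n (k * m)
      = eeK n (((m:ℤ) - (p:ℤ)) * k) := by
    intro k _
    rw [← eeK_add]
    congr 1
    ring
  rw [Finset.sum_congr rfl e1]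
  have e2 : ∑ k ∈ Finset.Icc (-(s:ℤ)) (s:ℤ), eeK n (((m:ℤ) - (p:ℤ)) * k)
      = ∑ a ∈ Finset.range n, eeK n (((m:ℤ) - (p:ℤ)) * ((a:ℤ) - s)) := by
    apply Finset.sum_nbij' (fun k => (k + (s:ℤ)).toNat) (fun a => (a:ℤ) - s)
    · intro k hk
      rw [Finset.mem_Icc] at hk
      rw [Finset.mem_range]
      omega
    · intro a ha
      rw [Finset.mem_range] at ha
      rw [Finset.mem_Icc]
      omega
    · intro k hk
      rw [Finset.mem_Icc] at hk
      omega
    · intro a ha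
      rw [Finset.mem_range] at ha
      omega
    · intro k hk
      rw [Finset.mem_Icc] at hk
      congr 2
      omega
  rw [e2]
  have e3 : ∀ a ∈ Finset.range n, eeK n (((m:ℤ) - (p:ℤ)) * ((a:ℤ) - s))
      = eeK n (-(((m:ℤ) - (p:ℤ)) * s)) * eeK n (((m:ℤ) - (p:ℤ)) * a) := by
    intro a _
    rw [← eeK_add]
    congr 1
    ring
  rw [Finset.sum_congr rfl e3, ← Finset.mul_sum]
  have e4 : ∑ a ∈ Finset.range n, eeK n (((m:ℤ) - (p:ℤ)) * (a:ℤ))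
      = if (n:ℤ) ∣ ((m:ℤ) - (p:ℤ)) then (n:ℂ) else 0 := by
    rw [← char_sum n hpos ((m:ℤ) - (p:ℤ))]
    apply Finset.sum_congr rfl
    intro a _
    rw [eeK_arg]
  rw [e4]
  by_cases h : m = p
  · subst h
    rw [if_pos (by simp), if_pos rfl]
    simp [eeK]
  · rw [if_neg (fun hd => h ((dvd_iff_eq n hpos m p).1 hd)), if_neg h, mul_zero]

lemma rowsum (n s : ℕ) (hn : n = 2*s+1) (j : Fin n) : ∑ m : Fin n, specDC n j m = 0 := by
  have h := eig n s hn 0 (by simp) j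
  simpa [eeK] using h

lemma key_sum (n₁ n₂ s₁ s₂ : ℕ) (h1 : n₁ = 2*s₁+1) (h2 : n₂ = 2*s₂+1)
    (ω₁ ω₂ : ℝ) (v : Fin n₂ × Fin n₁ → ℂ)
    (hker : ((ω₁ : ℂ) • ((1 : Matrix (Fin n₂) (Fin n₂) ℂ) ⊗ₖ specDC n₁)
        + (ω₂ : ℂ) • (specDC n₂ ⊗ₖ (1 : Matrix (Fin n₁) (Fin n₁) ℂ))).mulVec v = 0)
    (k₁ k₂ : ℤ) (hk1 : k₁.natAbs ≤ s₁) (hk2 : k₂.natAbs ≤ s₂) :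
    ((ω₁:ℂ) * k₁ + (ω₂:ℂ) * k₂)
      * ∑ m : Fin n₂ × Fin n₁, eeK n₂ (k₂ * m.1) * eeK n₁ (k₁ * m.2) * v m = 0 := by
  set M := ((ω₁ : ℂ) • ((1 : Matrix (Fin n₂) (Fin n₂) ℂ) ⊗ₖ specDC n₁)
        + (ω₂ : ℂ) • (specDC n₂ ⊗ₖ (1 : Matrix (Fin n₁) (Fin n₁) ℂ))) with hM
  have hT : ∑ j : Fin n₂ × Fin n₁,
      eeK n₂ (k₂ * j.1) * eeK n₁ (k₁ * j.2) * (M.mulVec v) j = 0 := by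
    rw [hker]
    simp
  have hMapp : ∀ j m : Fin n₂ × Fin n₁, M j m
      = (ω₁:ℂ) * ((if j.1 = m.1 then (1:ℂ) else 0) * specDC n₁ j.2 m.2)
        + (ω₂:ℂ) * (specDC n₂ j.1 m.1 * (if j.2 = m.2 then (1:ℂ) else 0)) := by
    intro j m
    rw [hM]
    simp [Matrix.add_apply, Matrix.smul_apply, Matrix.kroneckerMap_apply, Matrix.one_apply,
      smul_eq_mul]
  have hswap : ∑ j : Fin n₂ × Fin n₁, eeK n₂ (k₂ * j.1) * eeK n₁ (k₁ * j.2) * (M.mulVec v) j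
      = ∑ m : Fin n₂ × Fin n₁,
          (∑ j : Fin n₂ × Fin n₁, eeK n₂ (k₂ * j.1) * eeK n₁ (k₁ * j.2) * M j m) * v m := by
    simp only [Matrix.mulVec, dotProduct, Finset.mul_sum]
    rw [Finset.sum_comm]
    apply Finset.sum_congr rfl
    intro m _
    rw [Finset.sum_mul]
    apply Finset.sum_congr rfl
    intro j _
    ring
  have hinner : ∀ m : Fin n₂ × Fin n₁,
      ∑ j : Fin n₂ × Fin n₁, eeK n₂ (k₂ * j.1) * eeK n₁ (k₁ * j.2) * M j m
        = -(Complex.I * ((ω₁:ℂ) * k₁ + (ω₂:ℂ) * k₂))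
            * (eeK n₂ (k₂ * m.1) * eeK n₁ (k₁ * m.2)) := by
    intro m
    have colsum₁ := col_eig n₁ s₁ h1 k₁ hk1 m.2
    have colsum₂ := col_eig n₂ s₂ h2 k₂ hk2 m.1
    have dsum₁ : ∑ j₁ : Fin n₁, eeK n₁ (k₁ * j₁) * (if j₁ = m.2 then (1:ℂ) else 0)
        = eeK n₁ (k₁ * m.2) := by
      simp [mul_ite]
    have dsum₂ : ∑ j₂ : Fin n₂, eeK n₂ (k₂ * j₂) * (if j₂ = m.1 then (1:ℂ) else 0)
        = eeK n₂ (k₂ * m.1) := by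
      simp [mul_ite]
    calc ∑ j : Fin n₂ × Fin n₁, eeK n₂ (k₂ * j.1) * eeK n₁ (k₁ * j.2) * M j m
        = ∑ j₂ : Fin n₂, ∑ j₁ : Fin n₁,
            ((ω₁:ℂ) * ((eeK n₂ (k₂ * j₂) * (if j₂ = m.1 then (1:ℂ) else 0))
              * (eeK n₁ (k₁ * j₁) * specDC n₁ j₁ m.2))
            + (ω₂:ℂ) * ((eeK n₂ (k₂ * j₂) * specDC n₂ j₂ m.1)
              * (eeK n₁ (k₁ * j₁) * (if j₁ = m.2 then (1:ℂ) else 0)))) := by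
          rw [Fintype.sum_prod_type]
          apply Finset.sum_congr rfl
          intro j₂ _
          apply Finset.sum_congr rfl
          intro j₁ _
          rw [hMapp (j₂, j₁) m]
          ring
      _ = (ω₁:ℂ) * ((∑ j₂ : Fin n₂, eeK n₂ (k₂ * j₂) * (if j₂ = m.1 then (1:ℂ) else 0))
              * (∑ j₁ : Fin n₁, eeK n₁ (k₁ * j₁) * specDC n₁ j₁ m.2))
          + (ω₂:ℂ) * ((∑ j₂ : Fin n₂, eeK n₂ (k₂ * j₂) * specDC n₂ j₂ m.1)
              * (∑ j₁ : Fin n₁, eeK n₁ (k₁ * j₁) * (if j₁ = m.2 then (1:ℂ) else 0))) := by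
          rw [Finset.sum_mul_sum, Finset.sum_mul_sum, Finset.mul_sum, Finset.mul_sum,
            ← Finset.sum_add_distrib]
          apply Finset.sum_congr rfl
          intro j₂ _
          rw [Finset.mul_sum, Finset.mul_sum, ← Finset.sum_add_distrib]
      _ = -(Complex.I * ((ω₁:ℂ) * k₁ + (ω₂:ℂ) * k₂))
            * (eeK n₂ (k₂ * m.1) * eeK n₁ (k₁ * m.2)) := by
          rw [dsum₁, dsum₂, colsum₁, colsum₂]
          ring
  rw [hswap, Finset.sum_congr rfl (fun m _ => by rw [hinner m])] at hT
  have hT2 : Complex.I * (((ω₁:ℂ) * k₁ + (ω₂:ℂ) * k₂)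
      * ∑ m : Fin n₂ × Fin n₁, eeK n₂ (k₂ * m.1) * eeK n₁ (k₁ * m.2) * v m) = 0 := by
    have e : Complex.I * (((ω₁:ℂ) * k₁ + (ω₂:ℂ) * k₂)
        * ∑ m : Fin n₂ × Fin n₁, eeK n₂ (k₂ * m.1) * eeK n₁ (k₁ * m.2) * v m)
        = -(∑ m : Fin n₂ × Fin n₁,
            -(Complex.I * ((ω₁:ℂ) * k₁ + (ω₂:ℂ) * k₂))
              * (eeK n₂ (k₂ * m.1) * eeK n₁ (k₁ * m.2)) * v m) := by
      rw [Finset.mul_sum, Finset.mul_sum, ← Finset.sum_neg_distrib]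
      apply Finset.sum_congr rfl
      intro m _
      ring
    rw [e, hT, neg_zero]
  exact (mul_eq_zero.mp hT2).resolve_left Complex.I_ne_zero

theorem stmt_10 (ω₁ ω₂ : ℝ) (h₁ : 0 < ω₁) (h₂ : 0 < ω₂)
    (hindep : ∀ k₁ k₂ : ℤ, (k₁ : ℝ) * ω₁ + (k₂ : ℝ) * ω₂ = 0 → k₁ = 0 ∧ k₂ = 0)
    (n₁ n₂ : ℕ) (hodd₁ : Odd n₁) (hodd₂ : Odd n₂) (hn₁ : 3 ≤ n₁) (hn₂ : 3 ≤ n₂) :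
    ∀ v : Fin n₂ × Fin n₁ → ℂ,
      ((ω₁ : ℂ) • ((1 : Matrix (Fin n₂) (Fin n₂) ℂ) ⊗ₖ specDC n₁)
        + (ω₂ : ℂ) • (specDC n₂ ⊗ₖ (1 : Matrix (Fin n₁) (Fin n₁) ℂ))).mulVec v = 0
      ↔ ∃ c : ℂ, v = fun _ => c := by
  intro v
  obtain ⟨s₁, hs₁⟩ := hodd₁
  obtain ⟨s₂, hs₂⟩ := hodd₂
  have hs₁' : n₁ = 2 * s₁ + 1 := by omega
  have hs₂' : n₂ = 2 * s₂ + 1 := by omega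
  have hn₁C : (n₁:ℂ) ≠ 0 := Nat.cast_ne_zero.mpr (by omega)
  have hn₂C : (n₂:ℂ) ≠ 0 := Nat.cast_ne_zero.mpr (by omega)
  constructor
  · intro hker
    refine ⟨(∑ m : Fin n₂ × Fin n₁, v m) / ((n₂ : ℂ) * n₁), ?_⟩
    funext p
    have hzero : ∀ k₁ k₂ : ℤ, k₁.natAbs ≤ s₁ → k₂.natAbs ≤ s₂ → ¬(k₁ = 0 ∧ k₂ = 0) →
        ∑ m : Fin n₂ × Fin n₁, eeK n₂ (k₂ * m.1) * eeK n₁ (k₁ * m.2) * v m = 0 := by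
      intro k₁ k₂ hk1 hk2 hne
      have hks := key_sum n₁ n₂ s₁ s₂ hs₁' hs₂' ω₁ ω₂ v hker k₁ k₂ hk1 hk2
      have hμR : (k₁:ℝ) * ω₁ + (k₂:ℝ) * ω₂ ≠ 0 := fun h0 => hne (hindep k₁ k₂ h0)
      have hμ : ((ω₁:ℂ) * k₁ + (ω₂:ℂ) * k₂) ≠ 0 := by
        intro h0
        apply hμR
        have hc : (((k₁:ℝ) * ω₁ + (k₂:ℝ) * ω₂ : ℝ) : ℂ) = 0 := by
          push_cast
          linear_combination h0
        exact_mod_cast hc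
      exact (mul_eq_zero.mp hks).resolve_left hμ
    have hdouble : ∑ k₂ ∈ Finset.Icc (-(s₂:ℤ)) (s₂:ℤ), ∑ k₁ ∈ Finset.Icc (-(s₁:ℤ)) (s₁:ℤ),
        eeK n₂ (-(k₂ * p.1)) * eeK n₁ (-(k₁ * p.2)) *
          ∑ m : Fin n₂ × Fin n₁, eeK n₂ (k₂ * m.1) * eeK n₁ (k₁ * m.2) * v m
        = ∑ m : Fin n₂ × Fin n₁, v m := by
      rw [Finset.sum_eq_single_of_mem 0 (by rw [Finset.mem_Icc]; omega)]
      · rw [Finset.sum_eq_single_of_mem 0 (by rw [Finset.mem_Icc]; omega)]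
        · simp [eeK]
        · intro k₁ hk₁mem hk₁ne
          rw [Finset.mem_Icc] at hk₁mem
          rw [hzero k₁ 0 (by omega) (by simp) (by tauto), mul_zero]
      · intro k₂ hk₂mem hk₂ne
        rw [Finset.mem_Icc] at hk₂mem
        apply Finset.sum_eq_zero
        intro k₁ hk₁mem
        rw [Finset.mem_Icc] at hk₁mem
        rw [hzero k₁ k₂ (by omega) (by omega) (fun h => hk₂ne h.2), mul_zero]
    have hswap2 : ∑ k₂ ∈ Finset.Icc (-(s₂:ℤ)) (s₂:ℤ), ∑ k₁ ∈ Finset.Icc (-(s₁:ℤ)) (s₁:ℤ),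
        eeK n₂ (-(k₂ * p.1)) * eeK n₁ (-(k₁ * p.2)) *
          ∑ m : Fin n₂ × Fin n₁, eeK n₂ (k₂ * m.1) * eeK n₁ (k₁ * m.2) * v m
        = v p * ((n₂:ℂ) * n₁) := by
      have e1 : ∀ k₂ ∈ Finset.Icc (-(s₂:ℤ)) (s₂:ℤ), ∀ k₁ ∈ Finset.Icc (-(s₁:ℤ)) (s₁:ℤ),
          eeK n₂ (-(k₂ * p.1)) * eeK n₁ (-(k₁ * p.2)) *
            ∑ m : Fin n₂ × Fin n₁, eeK n₂ (k₂ * m.1) * eeK n₁ (k₁ * m.2) * v m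
          = ∑ m : Fin n₂ × Fin n₁, (eeK n₂ (-(k₂ * p.1)) * eeK n₂ (k₂ * m.1))
              * ((eeK n₁ (-(k₁ * p.2)) * eeK n₁ (k₁ * m.2)) * v m) := by
        intro k₂ _ k₁ _
        rw [Finset.mul_sum]
        apply Finset.sum_congr rfl
        intro m _
        ring
      rw [Finset.sum_congr rfl (fun k₂ hk₂ =>
        Finset.sum_congr rfl (fun k₁ hk₁ => e1 k₂ hk₂ k₁ hk₁))]
      rw [Finset.sum_congr rfl (fun k₂ _ => Finset.sum_comm), Finset.sum_comm]
      have e2 : ∀ m : Fin n₂ × Fin n₁,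
          ∑ k₂ ∈ Finset.Icc (-(s₂:ℤ)) (s₂:ℤ), ∑ k₁ ∈ Finset.Icc (-(s₁:ℤ)) (s₁:ℤ),
            (eeK n₂ (-(k₂ * p.1)) * eeK n₂ (k₂ * m.1))
              * ((eeK n₁ (-(k₁ * p.2)) * eeK n₁ (k₁ * m.2)) * v m)
          = (if m.1 = p.1 then (n₂:ℂ) else 0) * ((if m.2 = p.2 then (n₁:ℂ) else 0) * v m) := by
        intro m
        have einner : ∀ k₂ ∈ Finset.Icc (-(s₂:ℤ)) (s₂:ℤ),
            ∑ k₁ ∈ Finset.Icc (-(s₁:ℤ)) (s₁:ℤ),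
              (eeK n₂ (-(k₂ * p.1)) * eeK n₂ (k₂ * m.1))
                * ((eeK n₁ (-(k₁ * p.2)) * eeK n₁ (k₁ * m.2)) * v m)
            = (eeK n₂ (-(k₂ * p.1)) * eeK n₂ (k₂ * m.1))
                * ((if m.2 = p.2 then (n₁:ℂ) else 0) * v m) := by
          intro k₂ _
          calc ∑ k₁ ∈ Finset.Icc (-(s₁:ℤ)) (s₁:ℤ),
              (eeK n₂ (-(k₂ * p.1)) * eeK n₂ (k₂ * m.1))
                * ((eeK n₁ (-(k₁ * p.2)) * eeK n₁ (k₁ * m.2)) * v m)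
              = (eeK n₂ (-(k₂ * p.1)) * eeK n₂ (k₂ * m.1))
                * ((∑ k₁ ∈ Finset.Icc (-(s₁:ℤ)) (s₁:ℤ),
                    eeK n₁ (-(k₁ * p.2)) * eeK n₁ (k₁ * m.2)) * v m) := by
                rw [Finset.sum_mul, Finset.mul_sum]
            _ = (eeK n₂ (-(k₂ * p.1)) * eeK n₂ (k₂ * m.1))
                * ((if m.2 = p.2 then (n₁:ℂ) else 0) * v m) := by
                rw [orth n₁ s₁ hs₁' p.2 m.2]
        rw [Finset.sum_congr rfl einner, ← Finset.sum_mul, orth n₂ s₂ hs₂' p.1 m.1]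
      rw [Finset.sum_congr rfl (fun m _ => e2 m)]
      rw [Finset.sum_eq_single_of_mem p (Finset.mem_univ p)]
      · rw [if_pos rfl, if_pos rfl]
        ring
      · intro m _ hne
        by_cases hA : m.1 = p.1
        · have hB : ¬ m.2 = p.2 := fun hB => hne (Prod.ext hA hB)
          simp [hB]
        · simp [hA]
    have hfin := hdouble.symm.trans hswap2
    rw [hfin, mul_div_assoc, div_self (mul_ne_zero hn₂C hn₁C), mul_one]
  · rintro ⟨c, rfl⟩
    funext p
    simp only [Matrix.mulVec, dotProduct, Pi.zero_apply]
    have expand : ∀ m : Fin n₂ × Fin n₁,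
        ((ω₁ : ℂ) • ((1 : Matrix (Fin n₂) (Fin n₂) ℂ) ⊗ₖ specDC n₁)
          + (ω₂ : ℂ) • (specDC n₂ ⊗ₖ (1 : Matrix (Fin n₁) (Fin n₁) ℂ))) p m
        = (ω₁:ℂ) * ((if p.1 = m.1 then (1:ℂ) else 0) * specDC n₁ p.2 m.2)
          + (ω₂:ℂ) * (specDC n₂ p.1 m.1 * (if p.2 = m.2 then (1:ℂ) else 0)) := by
      intro m
      simp [Matrix.add_apply, Matrix.smul_apply, Matrix.kroneckerMap_apply, Matrix.one_apply,
        smul_eq_mul]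
    rw [Finset.sum_congr rfl (fun m _ => by rw [expand m])]
    rw [Fintype.sum_prod_type]
    have rows₁ := rowsum n₁ s₁ hs₁'
    have rows₂ := rowsum n₂ s₂ hs₂'
    have e3 : ∀ m₂ : Fin n₂, ∑ m₁ : Fin n₁,
        ((ω₁:ℂ) * ((if p.1 = m₂ then (1:ℂ) else 0) * specDC n₁ p.2 m₁)
          + (ω₂:ℂ) * (specDC n₂ p.1 m₂ * (if p.2 = m₁ then (1:ℂ) else 0))) * c
        = (ω₂:ℂ) * specDC n₂ p.1 m₂ * c := by
      intro m₂
      have t1 : ∀ m₁ : Fin n₁,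
          ((ω₁:ℂ) * ((if p.1 = m₂ then (1:ℂ) else 0) * specDC n₁ p.2 m₁)
            + (ω₂:ℂ) * (specDC n₂ p.1 m₂ * (if p.2 = m₁ then (1:ℂ) else 0))) * c
          = ((if p.1 = m₂ then (1:ℂ) else 0) * ((ω₁:ℂ) * c)) * specDC n₁ p.2 m₁
            + ((ω₂:ℂ) * specDC n₂ p.1 m₂ * c) * (if p.2 = m₁ then (1:ℂ) else 0) := by
        intro m₁
        ring
      rw [Finset.sum_congr rfl (fun m₁ _ => t1 m₁), Finset.sum_add_distrib,
        ← Finset.mul_sum, ← Finset.mul_sum, rows₁ p.2]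
      simp
    rw [Finset.sum_congr rfl (fun m₂ _ => e3 m₂)]
    have t2 : ∀ m₂ : Fin n₂, (ω₂:ℂ) * specDC n₂ p.1 m₂ * c
        = ((ω₂:ℂ) * c) * specDC n₂ p.1 m₂ := by
      intro m₂
      ring
    rw [Finset.sum_congr rfl (fun m₂ _ => t2 m₂), ← Finset.mul_sum, rows₂ p.1, mul_zero]
end

section
/- Let r : ℝ^N → ℝ^N be continuously differentiable, let v̂ ∈ ℝ^N, and suppose the Jacobian J = Dr(v̂) satisfies ‖Jz‖ ≥ c₀‖z‖ for all z, and that Dr is Lipschitz with constant L on the ball B(v̂, δ) where δ = c₀/(2L). If ‖r(v̂)‖ ≤ c₀δ/2, then there exists a unique q̂ ∈ B(v̂, δ) with r(q̂) = 0, and it satisfies ‖q̂ − v̂‖ ≤ (2/c₀)‖r(v̂)‖. -/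
open Metric

theorem stmt_17 {E : Type*} [NormedAddCommGroup E] [NormedSpace ℝ E]
    [FiniteDimensional ℝ E]
    (r : E → E) (hr : ContDiff ℝ 1 r) (vhat : E)
    (c₀ L δ : ℝ) (hc₀ : 0 < c₀) (hL : 0 < L) (hδ : δ = c₀ / (2 * L))
    (hstab : ∀ z : E, c₀ * ‖z‖ ≤ ‖fderiv ℝ r vhat z‖)
    (hlip : ∀ x ∈ closedBall vhat δ, ∀ y ∈ closedBall vhat δ,
      ‖fderiv ℝ r x - fderiv ℝ r y‖ ≤ L * ‖x - y‖)
    (hres : ‖r vhat‖ ≤ c₀ * δ / 2) :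
    ∃ qhat ∈ closedBall vhat δ, r qhat = 0 ∧
      ‖qhat - vhat‖ ≤ (2 / c₀) * ‖r vhat‖ ∧
      ∀ q' ∈ closedBall vhat δ, r q' = 0 → q' = qhat := by
  have hδpos : 0 < δ := by rw [hδ]; positivity
  have hLδ : L * δ = c₀ / 2 := by rw [hδ]; field_simp
  set J := fderiv ℝ r vhat with hJdef
  -- J is injective, hence bijective
  have hinj : Function.Injective J := by
    intro a b hab
    have h := hstab (a - b)
    rw [map_sub, hab, sub_self, norm_zero] at h
    have h1 : ‖a - b‖ ≤ 0 := by nlinarith [norm_nonneg (a - b)]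
    have h2 : a - b = 0 := norm_eq_zero.mp (le_antisymm h1 (norm_nonneg _))
    exact sub_eq_zero.mp h2
  have hinjL : Function.Injective (J : E →ₗ[ℝ] E) := hinj
  have hbij : Function.Bijective ((J : E →ₗ[ℝ] E) : E →ₗ[ℝ] E) :=
    ⟨hinjL, (LinearMap.injective_iff_surjective).mp hinjL⟩
  let e : E ≃L[ℝ] E := (LinearEquiv.ofBijective (J : E →ₗ[ℝ] E) hbij).toContinuousLinearEquiv
  have heJ : ∀ z : E, e z = J z := fun z => rfl
  have hsymm : ∀ w : E, c₀ * ‖e.symm w‖ ≤ ‖w‖ := by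
    intro w
    have h := hstab (e.symm w)
    have : J (e.symm w) = w := by rw [← heJ]; exact e.apply_symm_apply w
    rwa [this] at h
  -- differentiability
  have hdiff : ∀ x : E, HasFDerivAt r (fderiv ℝ r x) x := fun x =>
    (hr.differentiable one_ne_zero x).hasFDerivAt
  -- mean value bound on the ball
  have hvmem : vhat ∈ closedBall vhat δ := mem_closedBall_self hδpos.le
  have hbound : ∀ x ∈ closedBall vhat δ, ‖fderiv ℝ r x - J‖ ≤ c₀ / 2 := by
    intro x hx
    have h1 := hlip x hx vhat hvmem
    have h2 : ‖x - vhat‖ ≤ δ := mem_closedBall_iff_norm.mp hx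
    calc ‖fderiv ℝ r x - J‖ ≤ L * ‖x - vhat‖ := h1
      _ ≤ L * δ := by nlinarith
      _ = c₀ / 2 := hLδ
  have hkey : ∀ x ∈ closedBall vhat δ, ∀ y ∈ closedBall vhat δ,
      ‖(r x - J x) - (r y - J y)‖ ≤ c₀ / 2 * ‖x - y‖ := by
    intro x hx y hy
    have hg : ∀ z ∈ closedBall vhat δ,
        HasFDerivWithinAt (fun w => r w - J w) (fderiv ℝ r z - J) (closedBall vhat δ) z :=
      fun z _ => ((hdiff z).sub (J.hasFDerivAt)).hasFDerivWithinAt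
    exact (convex_closedBall vhat δ).norm_image_sub_le_of_norm_hasFDerivWithin_le
      hg hbound hy hx
  -- the Newton map
  set Φ : E → E := fun x => x - e.symm (r x) with hΦdef
  have hΦdiff : ∀ x y : E, Φ x - Φ y = e.symm (J (x - y) - (r x - r y)) := by
    intro x y
    have : e.symm (J (x - y)) = x - y := by rw [← heJ]; exact e.symm_apply_apply _
    rw [map_sub, this]
    simp [hΦdef]
    abel
  have hcontr : ∀ x ∈ closedBall vhat δ, ∀ y ∈ closedBall vhat δ,
      ‖Φ x - Φ y‖ ≤ 1 / 2 * ‖x - y‖ := by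
    intro x hx y hy
    rw [hΦdiff x y]
    have h1 := hsymm (J (x - y) - (r x - r y))
    have h2 : ‖J (x - y) - (r x - r y)‖ ≤ c₀ / 2 * ‖x - y‖ := by
      have := hkey x hx y hy
      have heq : J (x - y) - (r x - r y) = -((r x - J x) - (r y - J y)) := by
        rw [map_sub]; abel
      rw [heq, norm_neg]; exact this
    nlinarith [norm_nonneg (e.symm (J (x - y) - (r x - r y)))]
  have hΦv : ‖Φ vhat - vhat‖ ≤ δ / 2 := by
    have h1 : Φ vhat - vhat = -(e.symm (r vhat)) := by simp [hΦdef]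
    rw [h1, norm_neg]
    have := hsymm (r vhat)
    nlinarith
  have hmaps : ∀ x ∈ closedBall vhat δ, Φ x ∈ closedBall vhat δ := by
    intro x hx
    rw [mem_closedBall_iff_norm]
    calc ‖Φ x - vhat‖ ≤ ‖Φ x - Φ vhat‖ + ‖Φ vhat - vhat‖ := norm_sub_le_norm_sub_add_norm_sub _ _ _
      _ ≤ 1 / 2 * ‖x - vhat‖ + δ / 2 := by
          gcongr
          exact hcontr x hx vhat hvmem
      _ ≤ 1 / 2 * δ + δ / 2 := by
          have := mem_closedBall_iff_norm.mp hx
          nlinarith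
      _ = δ := by ring
  -- contraction on the subtype
  set s := closedBall vhat δ with hs
  have hsclosed : IsClosed s := isClosed_closedBall
  haveI : CompleteSpace s := hsclosed.completeSpace_coe
  haveI : Nonempty s := ⟨⟨vhat, hvmem⟩⟩
  let φ : s → s := fun x => ⟨Φ x.1, hmaps x.1 x.2⟩
  have hφ : ContractingWith (1/2 : NNReal) φ := by
    constructor
    · exact NNReal.coe_lt_coe.mp (by norm_num)
    · apply LipschitzWith.of_dist_le_mul
      intro a b
      have := hcontr a.1 a.2 b.1 b.2
      simpa [φ, Subtype.dist_eq, dist_eq_norm] using this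
  set q : s := hφ.fixedPoint φ with hq
  have hfix : φ q = q := hφ.fixedPoint_isFixedPt
  have hfix' : Φ q.1 = q.1 := congrArg Subtype.val hfix
  have hrq : r q.1 = 0 := by
    have h0 : (e.symm (r q.1) : E) = 0 := by
      have : (q.1 : E) - e.symm (r q.1) = q.1 := hfix'
      linear_combination (norm := abel1) -this
    have := congrArg e h0
    rwa [e.apply_symm_apply, map_zero] at this
  refine ⟨q.1, q.2, hrq, ?_, ?_⟩
  · have h1 : ‖q.1 - vhat‖ ≤ ‖Φ q.1 - Φ vhat‖ + ‖Φ vhat - vhat‖ := by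
      rw [hfix']; exact norm_sub_le_norm_sub_add_norm_sub _ _ _
    have h2 := hcontr q.1 q.2 vhat hvmem
    have h3 : ‖Φ vhat - vhat‖ ≤ 1 / c₀ * ‖r vhat‖ := by
      have h4 : Φ vhat - vhat = -(e.symm (r vhat)) := by simp [hΦdef]
      rw [h4, norm_neg]
      have := hsymm (r vhat)
      rw [div_mul_eq_mul_div, le_div_iff₀ hc₀]
      nlinarith
    have h5 : ‖q.1 - vhat‖ ≤ 2 / c₀ * ‖r vhat‖ := by
      have h7 : 2 / c₀ * ‖r vhat‖ = 2 * (1 / c₀ * ‖r vhat‖) := by ring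
      linarith
    exact h5
  · intro q' hq' hrq'
    have hfixq' : Φ q' = q' := by simp [hΦdef, hrq']
    have h := hcontr q' hq' q.1 q.2
    rw [hfixq', hfix'] at h
    have : ‖q' - q.1‖ = 0 := by nlinarith [norm_nonneg (q' - q.1)]
    have := norm_eq_zero.mp this
    exact sub_eq_zero.mp this
end
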